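/- Let V be a valuation ring with fraction field K and let h be a Lie algebra over V. Let r, r' : h → n_n(V) be Lie algebra homomorphisms into the strictly upper triangular n×n matrices over V such that, for each of r and r': (a) the entry functional λ_{i,i+1} : h → V is surjective for every i = 1,…,n−1, and (b) for all i ≠ j the map h → V × V, v ↦ (λ_{i,i+1}(v), λ_{j,j+1}(v)), is surjective (wideness over V). If there exists P ∈ GL_n(K) with P·r(v)·P^{−1} = r'(v) in M_n(K) for all v ∈ h, then there exists Q ∈ GL_n(V) with Q·r(v)·Q^{−1} = r'(v) in M_n(V) for all v ∈ h. -/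

import Mathlib

attribute [local instance 100] LieRing.ofAssociativeRing


/-- Let `V` be a valuation ring with fraction field `K` and `h` a Lie
algebra over `V`.  Let `r, r' : h → n_n(V)` be Lie algebra homomorphisms into the strictly
upper triangular matrices over `V` such that for each of them (a) each successor entry
functional `λ_{i,i+1} : h → V` is surjective, and (b) for all `i ≠ j` the map
`v ↦ (λ_{i,i+1} v, λ_{j,j+1} v)` is surjective onto `V × V` (wideness over `V`).  If `r` and
`r'` become conjugate over `K` by some `P ∈ GL_n(K)`, then they are already conjugate over `V`
by some `Q ∈ GL_n(V)`. -/
theorem stmt_18 {V : Type*} [CommRing V] [IsDomain V] [ValuationRing V]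
    {K : Type*} [Field K] [Algebra V K] [IsFractionRing V K]
    {h : Type*} [LieRing h] [LieAlgebra V h] {n : ℕ}
    (r r' : h →ₗ⁅V⁆ Matrix (Fin n) (Fin n) V)
    (hr : ∀ (v : h) (i j : Fin n), j ≤ i → r v i j = 0)
    (hr' : ∀ (v : h) (i j : Fin n), j ≤ i → r' v i j = 0)
    (hsurj : ∀ (i : ℕ) (hi : i + 1 < n) (c : V),
      ∃ v : h, r v ⟨i, by omega⟩ ⟨i + 1, hi⟩ = c)
    (hsurj' : ∀ (i : ℕ) (hi : i + 1 < n) (c : V),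
      ∃ v : h, r' v ⟨i, by omega⟩ ⟨i + 1, hi⟩ = c)
    (hwide : ∀ (i j : ℕ) (hi : i + 1 < n) (hj : j + 1 < n), i ≠ j → ∀ c d : V,
      ∃ v : h, r v ⟨i, by omega⟩ ⟨i + 1, hi⟩ = c ∧ r v ⟨j, by omega⟩ ⟨j + 1, hj⟩ = d)
    (hwide' : ∀ (i j : ℕ) (hi : i + 1 < n) (hj : j + 1 < n), i ≠ j → ∀ c d : V,
      ∃ v : h, r' v ⟨i, by omega⟩ ⟨i + 1, hi⟩ = c ∧ r' v ⟨j, by omega⟩ ⟨j + 1, hj⟩ = d)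
    (P : Matrix (Fin n) (Fin n) K) (hP : IsUnit P)
    (hconj : ∀ v : h,
      P * (r v).map (algebraMap V K) = (r' v).map (algebraMap V K) * P) :
    ∃ Q : Matrix (Fin n) (Fin n) V, IsUnit Q ∧ ∀ v : h, Q * r v = r' v * Q := by
  have finj : Function.Injective (algebraMap V K) := IsFractionRing.injective V K
  rcases Nat.lt_or_ge n 2 with hn2 | hn2
  · -- trivial case n ≤ 1 : both representations are zero
    refine ⟨1, isUnit_one, fun v => ?_⟩
    have hrr : r v = r' v := by
      ext i j
      have hi := i.isLt
      have hj := j.isLt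
      have hij : j ≤ i := Fin.le_def.mpr (by omega)
      rw [hr v i j hij, hr' v i j hij]
    rw [hrr, one_mul, mul_one]
  -- main case : n ≥ 2
  have hn0 : 0 < n := by omega
  set f := algebraMap V K with hfdef
  set z : Fin n := ⟨0, hn0⟩ with hzdef
  -- basic entrywise identity from hconj
  have base : ∀ (v : h) (I J : Fin n),
      (∑ k, P I k * f ((r v) k J)) = ∑ k, f ((r' v) I k) * P k J := by
    intro v I J
    have hb := congrFun (congrFun (hconj v) I) J
    simpa [Matrix.mul_apply, Matrix.map_apply] using hb
  -- P is upper triangular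
  have L1'' : ∀ (jb : ℕ) (j : Fin n), (j : ℕ) < jb → ∀ (i : Fin n),
      (j : ℕ) < (i : ℕ) → P i j = 0 := by
    intro jb
    induction jb with
    | zero => intro j hj; omega
    | succ jb ihjb =>
      intro j hj
      have key : ∀ (dlt : ℕ) (i : Fin n), n - (i : ℕ) < dlt → (j : ℕ) < (i : ℕ) →
          P i j = 0 := by
        intro dlt
        induction dlt with
        | zero => intro i hd; omega
        | succ dlt ihd =>
          intro i hd hji
          have hin : (i : ℕ) < n := i.isLt
          have hjn : (j : ℕ) < n := j.isLt
          obtain ⟨v, hv⟩ := hsurj' ((i : ℕ) - 1) (by omega) 1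
          set I : Fin n := ⟨(i : ℕ) - 1, by omega⟩ with hIdef
          have hv' : (r' v) I i = 1 := by
            rw [show i = (⟨(i : ℕ) - 1 + 1, by omega⟩ : Fin n) from Fin.ext (by simp; omega)]
            exact hv
          have hb := base v I j
          have hLHS : (∑ k, P I k * f ((r v) k j)) = 0 := by
            refine Finset.sum_eq_zero fun k _ => ?_
            rcases le_or_gt (j : ℕ) (k : ℕ) with hkj | hkj
            · rw [hr v k j (Fin.le_def.mpr hkj), map_zero, mul_zero]
            · have hPIk : P I k = 0 := by
                refine ihjb k (by omega) I ?_
                show (k : ℕ) < (i : ℕ) - 1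
                omega
              rw [hPIk, zero_mul]
          have hRHS : (∑ k, f ((r' v) I k) * P k j) = P i j := by
            rw [Finset.sum_eq_single i]
            · rw [hv', map_one, one_mul]
            · intro k _ hki
              have hkiv : (k : ℕ) ≠ (i : ℕ) := fun hh => hki (Fin.ext hh)
              rcases le_or_gt (k : ℕ) ((i : ℕ) - 1) with hk | hk
              · rw [hr' v I k (Fin.le_def.mpr (show (k : ℕ) ≤ (i : ℕ) - 1 from hk)),
                  map_zero, zero_mul]
              · have : P k j = 0 := ihd k (by omega) (by omega)
                rw [this, mul_zero]
            · intro hmem; exact absurd (Finset.mem_univ i) hmem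
          rw [← hRHS, ← hb]
          exact hLHS
      intro i hji
      exact key (n + 1) i (by omega) hji
  have L1 : ∀ i j : Fin n, (j : ℕ) < (i : ℕ) → P i j = 0 := fun i j hji =>
    L1'' ((j : ℕ) + 1) j (by omega) i hji
  -- diagonal entries are nonzero
  have hPdd : ∀ k : Fin n, P k k ≠ 0 := by
    have hdet : P.det ≠ 0 := ((Matrix.isUnit_iff_isUnit_det P).mp hP).ne_zero
    rw [Matrix.det_of_upperTriangular (by intro i j hij; exact L1 i j (Fin.lt_def.mp hij))]
      at hdet
    intro k hk
    exact hdet (Finset.prod_eq_zero (Finset.mem_univ k) hk)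
  -- the superdiagonal relation
  have star : ∀ (a b : Fin n), (b : ℕ) = (a : ℕ) + 1 → ∀ v : h,
      P a a * f ((r v) a b) = f ((r' v) a b) * P b b := by
    intro a b hab v
    have hb := base v a b
    have hL : (∑ k, P a k * f ((r v) k b)) = P a a * f ((r v) a b) := by
      refine Finset.sum_eq_single a (fun m _ hm => ?_) (fun hm => absurd (Finset.mem_univ a) hm)
      have hmv : (m : ℕ) ≠ (a : ℕ) := fun hh => hm (Fin.ext hh)
      rcases lt_or_ge (m : ℕ) (a : ℕ) with h1 | h1
      · rw [L1 a m h1, zero_mul]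
      · rw [hr v m b (Fin.le_def.mpr (by omega)), map_zero, mul_zero]
    have hR : (∑ k, f ((r' v) a k) * P k b) = f ((r' v) a b) * P b b := by
      refine Finset.sum_eq_single b (fun m _ hm => ?_) (fun hm => absurd (Finset.mem_univ b) hm)
      have hmv : (m : ℕ) ≠ (b : ℕ) := fun hh => hm (Fin.ext hh)
      rcases le_or_gt (m : ℕ) (a : ℕ) with h1 | h1
      · rw [hr' v a m (Fin.le_def.mpr h1), map_zero, zero_mul]
      · rw [L1 m b (by omega), mul_zero]
    rw [hL, hR] at hb
    exact hb
  -- consecutive diagonal entries differ by a unit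
  have L3 : ∀ (a b : Fin n), (b : ℕ) = (a : ℕ) + 1 →
      ∃ u : V, IsUnit u ∧ P a a = f u * P b b := by
    intro a b hab
    obtain ⟨v1, hv1⟩ := hsurj (a : ℕ) (by omega) 1
    obtain ⟨v2, hv2⟩ := hsurj' (a : ℕ) (by omega) 1
    have e2 : b = (⟨(a : ℕ) + 1, by omega⟩ : Fin n) := Fin.ext (by simp; omega)
    have hv1' : (r v1) a b = 1 := by rw [e2]; exact hv1
    have hv2' : (r' v2) a b = 1 := by rw [e2]; exact hv2
    have h1 := star a b hab v1
    have h2 := star a b hab v2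
    rw [hv1', map_one, mul_one] at h1
    rw [hv2', map_one, one_mul] at h2
    refine ⟨(r' v1) a b, ?_, h1⟩
    have hne := hPdd b
    have hcan : (f ((r' v1) a b) * f ((r v2) a b)) * P b b = 1 * P b b := by
      rw [one_mul]
      calc (f ((r' v1) a b) * f ((r v2) a b)) * P b b
          = (f ((r' v1) a b) * P b b) * f ((r v2) a b) := by ring
        _ = P a a * f ((r v2) a b) := by rw [← h1]
        _ = P b b := h2
    have := mul_right_cancel₀ hne hcan
    refine IsUnit.of_mul_eq_one ((r v2) a b) (finj ?_)
    rw [map_mul, map_one, this]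
  -- every diagonal entry is a unit multiple of P z z
  have L4' : ∀ (k : ℕ) (hk : k < n), ∃ w : V, IsUnit w ∧
      f w * P ⟨k, hk⟩ ⟨k, hk⟩ = P z z := by
    intro k
    induction k with
    | zero => intro hk; exact ⟨1, isUnit_one, by rw [map_one, one_mul]⟩
    | succ k ihk =>
      intro hk
      obtain ⟨w, hwu, hw⟩ := ihk (by omega)
      obtain ⟨u, huu, hu⟩ := L3 ⟨k, by omega⟩ ⟨k + 1, hk⟩ rfl
      refine ⟨w * u, hwu.mul huu, ?_⟩
      rw [map_mul, ← hw, hu]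
      ring
  have L4 : ∀ a : Fin n, ∃ w : V, IsUnit w ∧ f w * P a a = P z z := fun a =>
    L4' (a : ℕ) a.isLt
  have hdiagD : ∀ a : Fin n, ∃ s : V, P a a = f s * P z z := by
    intro a
    obtain ⟨w, hwu, hw⟩ := L4 a
    refine ⟨↑hwu.unit⁻¹, ?_⟩
    rw [← hw, ← mul_assoc, ← map_mul, IsUnit.val_inv_mul, map_one, one_mul]
  -- closure of multiples of `P z z` under sums
  have Dsum : ∀ (t : Finset (Fin n)) (g : Fin n → K), (∀ k ∈ t, ∃ c : V, g k = f c * P z z) →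
      ∃ c : V, (∑ k ∈ t, g k) = f c * P z z := by
    intro t g hg
    refine Finset.sum_induction g (fun x => ∃ c : V, x = f c * P z z) ?_
      ⟨0, by rw [map_zero, zero_mul]⟩ hg
    rintro x y ⟨cx, hx⟩ ⟨cy, hy⟩
    exact ⟨cx + cy, by rw [hx, hy, map_add]; ring⟩
  -- all entries of P away from the corner (0, n-1) are V-multiples of P z z
  have L5 : ∀ (t : ℕ) (i j : Fin n), ¬((i : ℕ) = 0 ∧ (j : ℕ) = n - 1) →
      (j : ℕ) < (i : ℕ) + t → ∃ s : V, P i j = f s * P z z := by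
    intro t
    induction t with
    | zero =>
      intro i j _ hlt
      exact ⟨0, by rw [L1 i j (by omega), map_zero, zero_mul]⟩
    | succ t ih =>
      intro i j hc hlt
      rcases Nat.lt_or_ge (j : ℕ) ((i : ℕ) + t) with hlt' | hge
      · exact ih i j hc hlt'
      have hj : (j : ℕ) = (i : ℕ) + t := by omega
      have hiv : (i : ℕ) < n := i.isLt
      have hjv : (j : ℕ) < n := j.isLt
      rcases Nat.eq_zero_or_pos t with ht0 | ht1
      · -- diagonal entry
        have hji : j = i := Fin.ext (by omega)
        rw [hji]
        exact hdiagD i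
      rcases Nat.lt_or_ge ((j : ℕ) + 1) n with hjn | hjn
      · -- Case A : j + 1 < n
        set J : Fin n := ⟨(j : ℕ) + 1, hjn⟩ with hJdef
        obtain ⟨v, hvi, hvj⟩ := hwide (i : ℕ) (j : ℕ) (by omega) (by omega) (by omega) 0 1
        have hvi' : (r v) i ⟨(i : ℕ) + 1, by omega⟩ = 0 := hvi
        have hvj' : (r v) j J = 1 := hvj
        have hb := base v i J
        have hsplit : P i j * f ((r v) j J) +
            ∑ k ∈ Finset.univ.erase j, P i k * f ((r v) k J)
            = ∑ k, P i k * f ((r v) k J) :=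
          Finset.add_sum_erase Finset.univ (fun k => P i k * f ((r v) k J))
            (Finset.mem_univ j)
        have hb2 := hsplit.trans hb
        rw [hvj', map_one, mul_one] at hb2
        have hRmem : ∃ c : V, (∑ k, f ((r' v) i k) * P k J) = f c * P z z := by
          refine Dsum _ _ fun k _ => ?_
          rcases le_or_gt (k : ℕ) (i : ℕ) with hk | hk
          · refine ⟨0, ?_⟩
            rw [hr' v i k (Fin.le_def.mpr hk)]
            simp
          rcases eq_or_lt_of_le (show (i : ℕ) + 1 ≤ (k : ℕ) from hk) with hk1 | hk1
          · -- k = i + 1 : the coefficient vanishes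
            have hkfin : k = (⟨(i : ℕ) + 1, by omega⟩ : Fin n) := Fin.ext (by simp; omega)
            have hstar := star i k (by omega) v
            have hz : (r v) i k = 0 := by rw [hkfin]; exact hvi'
            rw [hz, map_zero, mul_zero] at hstar
            have hz' : f ((r' v) i k) = 0 := by
              rcases mul_eq_zero.mp hstar.symm with hh | hh
              · exact hh
              · exact absurd hh (hPdd k)
            exact ⟨0, by rw [hz']; simp⟩
          · -- k ≥ i + 2
            obtain ⟨s, hs⟩ := ih k J (by rintro ⟨h0, -⟩; omega)
              (by show (j : ℕ) + 1 < (k : ℕ) + t; omega)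
            exact ⟨(r' v) i k * s, by rw [hs, map_mul]; ring⟩
        have hEmem : ∃ c : V,
            (∑ k ∈ Finset.univ.erase j, P i k * f ((r v) k J)) = f c * P z z := by
          refine Dsum _ _ fun k hk => ?_
          have hkj : k ≠ j := (Finset.mem_erase.mp hk).1
          rcases le_or_gt ((j : ℕ) + 1) (k : ℕ) with h1 | h1
          · refine ⟨0, ?_⟩
            rw [hr v k J (Fin.le_def.mpr (show (J : ℕ) ≤ (k : ℕ) from h1))]
            simp
          · have hkj' : (k : ℕ) < (j : ℕ) := by
              have : (k : ℕ) ≠ (j : ℕ) := fun hh => hkj (Fin.ext hh)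
              omega
            obtain ⟨s, hs⟩ := ih i k (by rintro ⟨h0, hnn⟩; omega) (by omega)
            exact ⟨s * (r v) k J, by rw [hs, map_mul]; ring⟩
        obtain ⟨cR, hcR⟩ := hRmem
        obtain ⟨cE, hcE⟩ := hEmem
        refine ⟨cR - cE, ?_⟩
        have hPij : P i j = (∑ k, f ((r' v) i k) * P k J) -
            ∑ k ∈ Finset.univ.erase j, P i k * f ((r v) k J) := by
          rw [← hb2]; ring
        rw [hPij, hcR, hcE, map_sub]; ring
      · -- Case B : j = n - 1 and i ≥ 1
        have hj1 : (j : ℕ) = n - 1 := by omega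
        have hi0 : 1 ≤ (i : ℕ) := by
          rcases Nat.eq_zero_or_pos (i : ℕ) with h0 | h0
          · exact absurd ⟨h0, hj1⟩ hc
          · omega
        have hile : (i : ℕ) ≤ n - 2 := by omega
        set I : Fin n := ⟨(i : ℕ) - 1, by omega⟩ with hIdef
        obtain ⟨v, hv1, hv2⟩ := hwide ((i : ℕ) - 1) (n - 2) (by omega) (by omega) (by omega) 1 0
        have hv1' : (r v) I i = 1 := by
          rw [show i = (⟨(i : ℕ) - 1 + 1, by omega⟩ : Fin n) from Fin.ext (by simp; omega)]
          exact hv1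
        have hv2' : (r v) ⟨n - 2, Nat.sub_lt hn0 (by norm_num)⟩ j = 0 := by
          convert hv2 using 2
          exact Fin.ext (by show (j : ℕ) = n - 2 + 1; omega)
        have hb := base v I j
        have hsplit : f ((r' v) I i) * P i j +
            ∑ k ∈ Finset.univ.erase i, f ((r' v) I k) * P k j
            = ∑ k, f ((r' v) I k) * P k j :=
          Finset.add_sum_erase Finset.univ (fun k => f ((r' v) I k) * P k j)
            (Finset.mem_univ i)
        have hb2 := hb.trans hsplit.symm
        have hLmem : ∃ c : V, (∑ k, P I k * f ((r v) k j)) = f c * P z z := by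
          refine Dsum _ _ fun k _ => ?_
          by_cases hkn2 : (k : ℕ) = n - 2
          · have hke : k = (⟨n - 2, by omega⟩ : Fin n) := Fin.ext (by simp; omega)
            refine ⟨0, ?_⟩
            rw [hke, hv2']
            simp
          rcases le_or_gt (j : ℕ) (k : ℕ) with h1 | h1
          · refine ⟨0, ?_⟩
            rw [hr v k j (Fin.le_def.mpr h1)]
            simp
          rcases lt_trichotomy (k : ℕ) ((i : ℕ) - 1) with h2 | h2 | h2
          · refine ⟨0, ?_⟩
            rw [L1 I k (show (k : ℕ) < (I : ℕ) from h2)]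
            simp
          · have hke : k = I := Fin.ext (by simp [hIdef]; omega)
            obtain ⟨s, hs⟩ := hdiagD I
            exact ⟨s * (r v) k j, by rw [hke, hs, map_mul]; ring⟩
          · obtain ⟨s, hs⟩ := ih I k (by rintro ⟨h0, hnn⟩; omega)
              (show (k : ℕ) < (I : ℕ) + t from (show (k : ℕ) < (i : ℕ) - 1 + t by omega))
            exact ⟨s * (r v) k j, by rw [hs, map_mul]; ring⟩
        have hEmem : ∃ c : V,
            (∑ k ∈ Finset.univ.erase i, f ((r' v) I k) * P k j) = f c * P z z := by
          refine Dsum _ _ fun k hk => ?_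
          have hki : k ≠ i := (Finset.mem_erase.mp hk).1
          rcases le_or_gt (k : ℕ) ((i : ℕ) - 1) with h1 | h1
          · refine ⟨0, ?_⟩
            rw [hr' v I k (Fin.le_def.mpr (show (k : ℕ) ≤ (I : ℕ) from h1))]
            simp
          · have hki' : (i : ℕ) < (k : ℕ) := by
              have : (k : ℕ) ≠ (i : ℕ) := fun hh => hki (Fin.ext hh)
              omega
            obtain ⟨s, hs⟩ := ih k j (by rintro ⟨h0, hnn⟩; omega) (by omega)
            exact ⟨(r' v) I k * s, by rw [hs, map_mul]; ring⟩
        have hstar := star I i (show (i : ℕ) = (i : ℕ) - 1 + 1 by omega) v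
        rw [hv1', map_one, mul_one] at hstar
        obtain ⟨u, huu, hu⟩ := L3 I i (show (i : ℕ) = (i : ℕ) - 1 + 1 by omega)
        have hcu : IsUnit ((r' v) I i) := by
          have h1 : f ((r' v) I i) * P i i = f u * P i i := by rw [← hstar, hu]
          have h2 := mul_right_cancel₀ (hPdd i) h1
          have h3 := finj h2
          rw [h3]
          exact huu
        obtain ⟨cL, hcL⟩ := hLmem
        obtain ⟨cE, hcE⟩ := hEmem
        have hfc : f ((r' v) I i) * P i j = f (cL - cE) * P z z := by
          have h4 : f ((r' v) I i) * P i j = (∑ k, P I k * f ((r v) k j)) -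
              ∑ k ∈ Finset.univ.erase i, f ((r' v) I k) * P k j := by
            rw [hb2]; ring
          rw [h4, hcL, hcE, map_sub]; ring
        refine ⟨↑hcu.unit⁻¹ * (cL - cE), ?_⟩
        rw [map_mul, mul_assoc, ← hfc, ← mul_assoc, ← map_mul, IsUnit.val_inv_mul,
          map_one, one_mul]
  -- choose the entries of Q
  have hmem : ∀ i j : Fin n, ¬((i : ℕ) = 0 ∧ (j : ℕ) = n - 1) →
      ∃ s : V, P i j = f s * P z z :=
    fun i j hc => L5 n i j hc (by have := j.isLt; omega)
  have hsel : ∀ i j : Fin n, ∃ s : V,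
      (¬((i : ℕ) = 0 ∧ (j : ℕ) = n - 1) → f s * P z z = P i j) ∧
      (((i : ℕ) = 0 ∧ (j : ℕ) = n - 1) → s = 0) := by
    intro i j
    by_cases hcc : (i : ℕ) = 0 ∧ (j : ℕ) = n - 1
    · exact ⟨0, fun hh => absurd hcc hh, fun _ => rfl⟩
    · obtain ⟨s, hs⟩ := hmem i j hcc
      exact ⟨s, fun _ => hs.symm, fun hh => absurd hh hcc⟩
  choose QQ hQ1 hQ2 using hsel
  refine ⟨Matrix.of QQ, ?_, ?_⟩
  · -- Q is invertible over V
    have hQtri : Matrix.BlockTriangular (Matrix.of QQ) id := by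
      intro a b hab
      have hab' : (b : ℕ) < (a : ℕ) := hab
      have h0 : f (QQ a b) * P z z = P a b := hQ1 a b (by rintro ⟨h1, h2⟩; omega)
      rw [L1 a b hab'] at h0
      have h1 : f (QQ a b) = 0 := by
        rcases mul_eq_zero.mp h0 with hh | hh
        · exact hh
        · exact absurd hh (hPdd z)
      have h2 : QQ a b = 0 := finj (h1.trans (map_zero f).symm)
      exact h2
    have hdiagU : ∀ a : Fin n, IsUnit (QQ a a) := by
      intro a
      obtain ⟨w, hwu, hw⟩ := L4 a
      have h0 : f (QQ a a) * P z z = P a a := hQ1 a a (by rintro ⟨h1, h2⟩; omega)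
      have hcan : (f (QQ a a) * f w) * P a a = 1 * P a a := by
        rw [one_mul]
        calc (f (QQ a a) * f w) * P a a = f (QQ a a) * (f w * P a a) := by ring
          _ = f (QQ a a) * P z z := by rw [hw]
          _ = P a a := h0
      have h1 := mul_right_cancel₀ (hPdd a) hcan
      exact IsUnit.of_mul_eq_one w (finj (by rw [map_mul, map_one]; exact h1))
    rw [Matrix.isUnit_iff_isUnit_det, Matrix.det_of_upperTriangular hQtri]
    exact Finset.prod_induction _ IsUnit (fun x y hx hy => hx.mul hy) isUnit_one
      (fun a _ => hdiagU a)
  · -- Q intertwines r and r'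
    intro v
    ext i j
    apply finj
    apply mul_right_cancel₀ (hPdd z)
    calc f ((Matrix.of QQ * r v) i j) * P z z
        = ∑ k, (f (QQ i k) * P z z) * f ((r v) k j) := by
          rw [Matrix.mul_apply, map_sum, Finset.sum_mul]
          refine Finset.sum_congr rfl fun k _ => ?_
          rw [map_mul]
          simp only [Matrix.of_apply]
          ring
      _ = ∑ k, P i k * f ((r v) k j) := by
          refine Finset.sum_congr rfl fun k _ => ?_
          by_cases hcc : (i : ℕ) = 0 ∧ (k : ℕ) = n - 1
          · have h1 : QQ i k = 0 := hQ2 i k hcc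
            have h2 : (r v) k j = 0 := hr v k j (Fin.le_def.mpr (by have := j.isLt; omega))
            rw [h1, h2]
            simp
          · rw [hQ1 i k hcc]
      _ = ∑ k, f ((r' v) i k) * P k j := base v i j
      _ = ∑ k, f ((r' v) i k) * (f (QQ k j) * P z z) := by
          refine Finset.sum_congr rfl fun k _ => ?_
          by_cases hcc : (k : ℕ) = 0 ∧ (j : ℕ) = n - 1
          · have h1 : QQ k j = 0 := hQ2 k j hcc
            have h2 : (r' v) i k = 0 := hr' v i k (Fin.le_def.mpr (by omega))
            rw [h1, h2]
            simp
          · rw [hQ1 k j hcc]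
      _ = f ((r' v * Matrix.of QQ) i j) * P z z := by
          rw [Matrix.mul_apply, map_sum, Finset.sum_mul]
          refine Finset.sum_congr rfl fun k _ => ?_
          rw [map_mul]
          simp only [Matrix.of_apply]
          ring
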